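/- In the discrete case-control model, the expected gradient of the correction term log(1 + λ_0 (L(Θ, W) − f)) at the true parameter satisfies Σ_{y,z,w} (a_y/f_y) P(w) p(Θ_0, y, z, w) · ∇_Θ log(1 + λ_0 (L(Θ, w) − f))|_{Θ=Θ_0} = λ_0 Σ_w P(w) ∇_Θ L(Θ, w)|_{Θ=Θ_0}, where f_true := f and f_false := 1 − f. (Note that 1 + λ_0 (L(Θ_0, w) − f) > 0 for all w since 0 ≤ L(Θ_0, w) ≤ 1.) -/

import Mathlib

open Finset

/-- In the discrete case-control model, the expected gradient of the
correction term `log (1 + λ₀ (L(Θ, W) - f))` at the true parameter equals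
`λ₀` times the gradient of the population prevalence. Here
`L Θ w = ∑ z, p Θ true z w`, `f_true = f`, `f_false = 1 - f`,
`a_true = a₁`, `a_false = a₀`. -/
theorem expected_correction_score {W Z : Type*} [Fintype W] [Fintype Z]
    (k : ℕ) (p : (Fin k → ℝ) → Bool → Z → W → ℝ) (Θ₀ : Fin k → ℝ)
    (hp_nonneg : ∀ Θ y z w, 0 ≤ p Θ y z w)
    (hp_sum : ∀ Θ w, ∑ y : Bool, ∑ z : Z, p Θ y z w = 1)
    (hp_diff : ∀ y z w, DifferentiableAt ℝ (fun Θ => p Θ y z w) Θ₀)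
    (hp_pos : ∀ y z w, 0 < p Θ₀ y z w)
    (P : W → ℝ) (hP_nonneg : ∀ w, 0 ≤ P w) (hP_sum : ∑ w, P w = 1)
    (a₀ a₁ : ℝ) (ha₀ : 0 < a₀) (ha₁ : 0 < a₁) (ha : a₀ + a₁ = 1)
    (f : ℝ) (hf : f = ∑ w, P w * ∑ z : Z, p Θ₀ true z w)
    (hf0 : 0 < f) (hf1 : f < 1)
    (lam₀ : ℝ) (hlam : lam₀ = a₁ / f - a₀ / (1 - f)) :
    ∑ y : Bool, ∑ z : Z, ∑ w : W,
      ((if y then a₁ else a₀) / (if y then f else 1 - f) * P w * p Θ₀ y z w) •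
        fderiv ℝ
          (fun Θ => Real.log (1 + lam₀ * ((∑ z' : Z, p Θ true z' w) - f))) Θ₀
      = lam₀ • ∑ w : W, P w • fderiv ℝ (fun Θ => ∑ z : Z, p Θ true z w) Θ₀ := by
  have hfne : f ≠ 0 := ne_of_gt hf0
  have h1f : (0:ℝ) < 1 - f := by linarith
  have h1fne : (1:ℝ) - f ≠ 0 := ne_of_gt h1f
  set L : W → ℝ := fun w => ∑ z : Z, p Θ₀ true z w with hLdef
  set L' : W → (Fin k → ℝ) →L[ℝ] ℝ :=
    fun w => fderiv ℝ (fun Θ => ∑ z : Z, p Θ true z w) Θ₀ with hL'def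
  set D : W → ℝ := fun w => 1 + lam₀ * (L w - f) with hDdef
  have hZne : Nonempty Z := by
    by_contra h
    rw [not_nonempty_iff] at h
    have hWne : Nonempty W := by
      by_contra hw
      rw [not_nonempty_iff] at hw
      simp at hf
      linarith
    obtain ⟨w⟩ := hWne
    have := hp_sum Θ₀ w
    simp at this
  have hLpos : ∀ w, 0 < L w := fun w =>
    Finset.sum_pos (fun z _ => hp_pos true z w) Finset.univ_nonempty
  have hLlt : ∀ w, L w < 1 := by
    intro w
    have hs := hp_sum Θ₀ w
    rw [Fintype.sum_bool] at hs
    have : 0 < ∑ z : Z, p Θ₀ false z w :=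
      Finset.sum_pos (fun z _ => hp_pos false z w) Finset.univ_nonempty
    simp only [hLdef]
    linarith
  have hDid : ∀ w, D w = a₁ / f * L w + a₀ / (1 - f) * (1 - L w) := by
    intro w
    have ha' : a₀ = 1 - a₁ := by linarith
    simp only [hDdef, hlam, ha']
    field_simp
    ring
  have hDpos : ∀ w, 0 < D w := by
    intro w
    rw [hDid w]
    have h1 : 0 < a₁ / f * L w := mul_pos (div_pos ha₁ hf0) (hLpos w)
    have h3 : 0 < 1 - L w := by have := hLlt w; linarith
    have h2 : 0 < a₀ / (1 - f) * (1 - L w) := mul_pos (div_pos ha₀ h1f) h3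
    linarith
  have key : ∀ w : W,
      fderiv ℝ (fun Θ => Real.log (1 + lam₀ * ((∑ z' : Z, p Θ true z' w) - f))) Θ₀
        = (D w)⁻¹ • lam₀ • L' w := by
    intro w
    have hg : DifferentiableAt ℝ (fun Θ => ∑ z' : Z, p Θ true z' w) Θ₀ :=
      DifferentiableAt.fun_sum fun z _ => hp_diff true z w
    have hinner : HasFDerivAt (fun Θ => 1 + lam₀ * ((∑ z' : Z, p Θ true z' w) - f))
        (lam₀ • L' w) Θ₀ := by
      have := ((hg.hasFDerivAt.sub_const f).const_mul lam₀).const_add 1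
      simpa [hL'def] using this
    have hval : (1 + lam₀ * ((∑ z' : Z, p Θ₀ true z' w) - f)) ≠ 0 := by
      have := hDpos w
      simp only [hDdef, hLdef] at this
      exact ne_of_gt this
    exact (hinner.log hval).fderiv
  simp only [key]
  have comm : ∀ F : Bool → Z → W → (Fin k → ℝ) →L[ℝ] ℝ,
      ∑ y : Bool, ∑ z : Z, ∑ w : W, F y z w = ∑ w : W, ∑ y : Bool, ∑ z : Z, F y z w := by
    intro F
    calc ∑ y : Bool, ∑ z : Z, ∑ w : W, F y z w
        = ∑ y : Bool, ∑ w : W, ∑ z : Z, F y z w :=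
          Finset.sum_congr rfl fun y _ => Finset.sum_comm
      _ = ∑ w : W, ∑ y : Bool, ∑ z : Z, F y z w := Finset.sum_comm
  rw [comm, Finset.smul_sum]
  refine Finset.sum_congr rfl fun w _ => ?_
  have hsum_c : ∑ y : Bool, ∑ z : Z,
      (if y then a₁ else a₀) / (if y then f else 1 - f) * P w * p Θ₀ y z w
      = P w * D w := by
    have hfalse : ∑ z : Z, p Θ₀ false z w = 1 - L w := by
      have hs := hp_sum Θ₀ w
      rw [Fintype.sum_bool] at hs
      simp only [hLdef]
      linarith
    rw [Fintype.sum_bool]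
    simp only [if_true, Bool.false_eq_true, if_false]
    rw [← Finset.mul_sum, ← Finset.mul_sum]
    have hL_eq : ∑ z : Z, p Θ₀ true z w = L w := rfl
    rw [hL_eq, hfalse, hDid w]
    ring
  calc ∑ y : Bool, ∑ z : Z,
        ((if y then a₁ else a₀) / (if y then f else 1 - f) * P w * p Θ₀ y z w) •
          ((D w)⁻¹ • lam₀ • L' w)
      = (∑ y : Bool, ∑ z : Z,
          (if y then a₁ else a₀) / (if y then f else 1 - f) * P w * p Θ₀ y z w) •
          ((D w)⁻¹ • lam₀ • L' w) := by
        rw [Finset.sum_smul]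
        exact Finset.sum_congr rfl fun y _ => (Finset.sum_smul).symm
    _ = (P w * D w) • ((D w)⁻¹ • lam₀ • L' w) := by rw [hsum_c]
    _ = lam₀ • P w • L' w := by
        rw [smul_smul, smul_smul, smul_smul]
        congr 1
        field_simp [(hDpos w).ne']
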